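/- arXiv:1712.02387 — 5 statements merged into one kernel-verified Lean document; each statement's English description precedes it below -/
import Mathlib

section
/- Let f : ℝ⁴ → ℝ be given by f(x,u,p,q) = (6p/u + 3/x)·q − 6p³/u² − 6p²/(x·u) − 6p/x² − 6u/x³ on the open set where x ≠ 0 and u ≠ 0. Then the relative invariant I₃ = 4 f_q³ + 18 f_q (f_p − D_x f_q) + 9 D_x² f_q − 27 D_x f_p + 54 f_u vanishes identically on this set. -/
/-- Partial derivative with respect to the first variable `x`. -/
noncomputable def pX (g : ℝ → ℝ → ℝ → ℝ → ℝ) (x u p q : ℝ) : ℝ :=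
  deriv (fun t => g t u p q) x

/-- Partial derivative with respect to the second variable `u`. -/
noncomputable def pU (g : ℝ → ℝ → ℝ → ℝ → ℝ) (x u p q : ℝ) : ℝ :=
  deriv (fun t => g x t p q) u

/-- Partial derivative with respect to the third variable `p`. -/
noncomputable def pP (g : ℝ → ℝ → ℝ → ℝ → ℝ) (x u p q : ℝ) : ℝ :=
  deriv (fun t => g x u t q) p

/-- Partial derivative with respect to the fourth variable `q`. -/
noncomputable def pQ (g : ℝ → ℝ → ℝ → ℝ → ℝ) (x u p q : ℝ) : ℝ :=
  deriv (fun t => g x u p t) q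

/-- The total derivative operator
`D_x = ∂/∂x + p ∂/∂u + q ∂/∂p + f ∂/∂q` associated with the ODE `u''' = f`. -/
noncomputable def Dx (f g : ℝ → ℝ → ℝ → ℝ → ℝ) : ℝ → ℝ → ℝ → ℝ → ℝ :=
  fun x u p q =>
    pX g x u p q + p * pU g x u p q + q * pP g x u p q + f x u p q * pQ g x u p q

/-- The right hand side of the nonlinear ODE of Example 3.1:
`u''' = (6u'/u + 3/x)u'' − 6u'³/u² − 6u'²/(xu) − 6u'/x² − 6u/x³`. -/
noncomputable def f : ℝ → ℝ → ℝ → ℝ → ℝ := fun x u p q =>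
  (6 * p / u + 3 / x) * q - 6 * p ^ 3 / u ^ 2 - 6 * p ^ 2 / (x * u)
    - 6 * p / x ^ 2 - 6 * u / x ^ 3

/-- derivative of a general Laurent expression. -/
lemma hasDerivAt_gen (c0 c1 c2 c3 c4 c5 c6 : ℝ) {x : ℝ} (hx : x ≠ 0) :
    HasDerivAt (fun t : ℝ => c1 / t + c2 / t ^ 2 + c3 / t ^ 3 + c4 * t + c5 * t ^ 2 + c6 * t ^ 3 + c0)
      (-c1 / x ^ 2 - 2 * c2 / x ^ 3 - 3 * c3 / x ^ 4 + c4 + 2 * c5 * x + 3 * c6 * x ^ 2) x := by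
  have h1 := (hasDerivAt_inv hx).const_mul c1
  have h2 := ((hasDerivAt_pow 2 x).inv (pow_ne_zero 2 hx)).const_mul c2
  have h3 := ((hasDerivAt_pow 3 x).inv (pow_ne_zero 3 hx)).const_mul c3
  have h4 := (hasDerivAt_id x).const_mul c4
  have h5 := (hasDerivAt_pow 2 x).const_mul c5
  have h6 := (hasDerivAt_pow 3 x).const_mul c6
  have h := (((((h1.add h2).add h3).add h4).add h5).add h6).add_const c0
  refine h.congr_deriv ?_
  push_cast
  field_simp
  ring

/-- derivative of a cubic polynomial. -/
lemma hasDerivAt_poly (c0 c1 c2 c3 : ℝ) (x : ℝ) :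
    HasDerivAt (fun t : ℝ => c1 * t + c2 * t ^ 2 + c3 * t ^ 3 + c0)
      (c1 + 2 * c2 * x + 3 * c3 * x ^ 2) x := by
  have h1 := (hasDerivAt_id x).const_mul c1
  have h2 := (hasDerivAt_pow 2 x).const_mul c2
  have h3 := (hasDerivAt_pow 3 x).const_mul c3
  have h := ((h1.add h2).add h3).add_const c0
  refine h.congr_deriv ?_
  push_cast
  ring

lemma deriv_congr_ne {F G : ℝ → ℝ} {x : ℝ} (hx : x ≠ 0)
    (h : ∀ t : ℝ, t ≠ 0 → F t = G t) : deriv F x = deriv G x :=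
  Filter.EventuallyEq.deriv_eq <| by
    filter_upwards [eventually_ne_nhds hx] with t ht using h t ht

lemma pQ_f (x u p q : ℝ) : pQ f x u p q = 6 * p / u + 3 / x := by
  have hfun : (fun t : ℝ => f x u p t)
      = fun t => (6 * p / u + 3 / x) * t + 0 * t ^ 2 + 0 * t ^ 3
          + (-(6 * p ^ 3 / u ^ 2) - 6 * p ^ 2 / (x * u) - 6 * p / x ^ 2 - 6 * u / x ^ 3) := by
    funext t; simp only [f]; ring
  simp only [pQ]; rw [hfun, (hasDerivAt_poly _ _ _ _ q).deriv]; ring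

lemma pP_f (x u p q : ℝ) :
    pP f x u p q = 6 * q / u - 18 * p ^ 2 / u ^ 2 - 12 * p / (x * u) - 6 / x ^ 2 := by
  have hfun : (fun t : ℝ => f x u t q)
      = fun t => (6 * q / u - 6 / x ^ 2) * t + (-(6 / (x * u))) * t ^ 2 + (-(6 / u ^ 2)) * t ^ 3
          + (3 * q / x - 6 * u / x ^ 3) := by
    funext t; simp only [f]; ring
  simp only [pP]; rw [hfun, (hasDerivAt_poly _ _ _ _ p).deriv]; ring

lemma pU_f (x u p q : ℝ) (hu : u ≠ 0) :
    pU f x u p q = -(6 * p * q) / u ^ 2 + 12 * p ^ 3 / u ^ 3 + 6 * p ^ 2 / (x * u ^ 2) - 6 / x ^ 3 := by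
  have hfun : (fun t : ℝ => f x t p q)
      = fun t => (6 * p * q - 6 * p ^ 2 / x) / t + (-(6 * p ^ 3)) / t ^ 2 + 0 / t ^ 3
          + (-(6 / x ^ 3)) * t + 0 * t ^ 2 + 0 * t ^ 3 + (3 * q / x - 6 * p / x ^ 2) := by
    funext t; simp only [f]; ring
  simp only [pU]; rw [hfun, (hasDerivAt_gen _ _ _ _ _ _ _ hu).deriv]; ring

lemma DxA (x u p q : ℝ) (hx : x ≠ 0) (hu : u ≠ 0) :
    Dx f (pQ f) x u p q = -3 / x ^ 2 - 6 * p ^ 2 / u ^ 2 + 6 * q / u := by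
  have e : Dx f (pQ f) x u p q = pX (pQ f) x u p q + p * pU (pQ f) x u p q
      + q * pP (pQ f) x u p q + f x u p q * pQ (pQ f) x u p q := rfl
  rw [e]
  have h1 : pX (pQ f) x u p q = -3 / x ^ 2 := by
    have hfun : (fun t : ℝ => pQ f t u p q)
        = fun t => 3 / t + 0 / t ^ 2 + 0 / t ^ 3 + 0 * t + 0 * t ^ 2 + 0 * t ^ 3 + 6 * p / u := by
      funext t; rw [pQ_f]; ring
    simp only [pX]; rw [hfun, (hasDerivAt_gen _ _ _ _ _ _ _ hx).deriv]; ring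
  have h2 : pU (pQ f) x u p q = -(6 * p) / u ^ 2 := by
    have hfun : (fun t : ℝ => pQ f x t p q)
        = fun t => (6 * p) / t + 0 / t ^ 2 + 0 / t ^ 3 + 0 * t + 0 * t ^ 2 + 0 * t ^ 3 + 3 / x := by
      funext t; rw [pQ_f]; ring
    simp only [pU]; rw [hfun, (hasDerivAt_gen _ _ _ _ _ _ _ hu).deriv]; ring
  have h3 : pP (pQ f) x u p q = 6 / u := by
    have hfun : (fun t : ℝ => pQ f x u t q)
        = fun t => (6 / u) * t + 0 * t ^ 2 + 0 * t ^ 3 + 3 / x := by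
      funext t; rw [pQ_f]; ring
    simp only [pP]; rw [hfun, (hasDerivAt_poly _ _ _ _ p).deriv]; ring
  have h4 : pQ (pQ f) x u p q = 0 := by
    have hfun : (fun t : ℝ => pQ f x u p t)
        = fun t => 0 * t + 0 * t ^ 2 + 0 * t ^ 3 + (6 * p / u + 3 / x) := by
      funext t; rw [pQ_f]; ring
    rw [show pQ (pQ f) x u p q = deriv (fun t : ℝ => pQ f x u p t) q from rfl,
      hfun, (hasDerivAt_poly _ _ _ _ q).deriv]; ring
  rw [h1, h2, h3, h4]; ring

lemma DxDxA (x u p q : ℝ) (hx : x ≠ 0) (hu : u ≠ 0) :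
    Dx f (Dx f (pQ f)) x u p q
      = 6 / x ^ 3 + p * (12 * p ^ 2 / u ^ 3 - 6 * q / u ^ 2) + q * (-(12 * p) / u ^ 2)
        + f x u p q * (6 / u) := by
  have e : Dx f (Dx f (pQ f)) x u p q = pX (Dx f (pQ f)) x u p q + p * pU (Dx f (pQ f)) x u p q
      + q * pP (Dx f (pQ f)) x u p q + f x u p q * pQ (Dx f (pQ f)) x u p q := rfl
  rw [e]
  have h1 : pX (Dx f (pQ f)) x u p q = 6 / x ^ 3 := by
    simp only [pX]
    rw [deriv_congr_ne hx
      (G := fun t => 0 / t + (-3) / t ^ 2 + 0 / t ^ 3 + 0 * t + 0 * t ^ 2 + 0 * t ^ 3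
        + (-(6 * p ^ 2 / u ^ 2) + 6 * q / u))
      (fun t ht => by rw [DxA t u p q ht hu]; ring)]
    rw [(hasDerivAt_gen _ _ _ _ _ _ _ hx).deriv]; ring
  have h2 : pU (Dx f (pQ f)) x u p q = 12 * p ^ 2 / u ^ 3 - 6 * q / u ^ 2 := by
    simp only [pU]
    rw [deriv_congr_ne hu
      (G := fun t => (6 * q) / t + (-(6 * p ^ 2)) / t ^ 2 + 0 / t ^ 3 + 0 * t + 0 * t ^ 2
        + 0 * t ^ 3 + (-(3 / x ^ 2)))
      (fun t ht => by rw [DxA x t p q hx ht]; ring)]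
    rw [(hasDerivAt_gen _ _ _ _ _ _ _ hu).deriv]; ring
  have h3 : pP (Dx f (pQ f)) x u p q = -(12 * p) / u ^ 2 := by
    have hfun : (fun t : ℝ => Dx f (pQ f) x u t q)
        = fun t => 0 * t + (-(6 / u ^ 2)) * t ^ 2 + 0 * t ^ 3 + (-(3 / x ^ 2) + 6 * q / u) := by
      funext t; rw [DxA x u t q hx hu]; ring
    simp only [pP]; rw [hfun, (hasDerivAt_poly _ _ _ _ p).deriv]; ring
  have h4 : pQ (Dx f (pQ f)) x u p q = 6 / u := by
    have hfun : (fun t : ℝ => Dx f (pQ f) x u p t)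
        = fun t => (6 / u) * t + 0 * t ^ 2 + 0 * t ^ 3 + (-(3 / x ^ 2) - 6 * p ^ 2 / u ^ 2) := by
      funext t; rw [DxA x u p t hx hu]; ring
    simp only [pQ]; rw [hfun, (hasDerivAt_poly _ _ _ _ q).deriv]; ring
  rw [h1, h2, h3, h4]

lemma DxB (x u p q : ℝ) (hx : x ≠ 0) (hu : u ≠ 0) :
    Dx f (pP f) x u p q
      = (12 * p / (x ^ 2 * u) + 12 / x ^ 3)
        + p * (-(6 * q) / u ^ 2 + 36 * p ^ 2 / u ^ 3 + 12 * p / (x * u ^ 2))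
        + q * (-(36 * p) / u ^ 2 - 12 / (x * u))
        + f x u p q * (6 / u) := by
  have e : Dx f (pP f) x u p q = pX (pP f) x u p q + p * pU (pP f) x u p q
      + q * pP (pP f) x u p q + f x u p q * pQ (pP f) x u p q := rfl
  rw [e]
  have h1 : pX (pP f) x u p q = 12 * p / (x ^ 2 * u) + 12 / x ^ 3 := by
    have hfun : (fun t : ℝ => pP f t u p q)
        = fun t => (-(12 * p / u)) / t + (-6) / t ^ 2 + 0 / t ^ 3 + 0 * t + 0 * t ^ 2 + 0 * t ^ 3
          + (6 * q / u - 18 * p ^ 2 / u ^ 2) := by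
      funext t; rw [pP_f]; ring
    simp only [pX]; rw [hfun, (hasDerivAt_gen _ _ _ _ _ _ _ hx).deriv]; ring
  have h2 : pU (pP f) x u p q = -(6 * q) / u ^ 2 + 36 * p ^ 2 / u ^ 3 + 12 * p / (x * u ^ 2) := by
    have hfun : (fun t : ℝ => pP f x t p q)
        = fun t => (6 * q - 12 * p / x) / t + (-(18 * p ^ 2)) / t ^ 2 + 0 / t ^ 3 + 0 * t
          + 0 * t ^ 2 + 0 * t ^ 3 + (-(6 / x ^ 2)) := by
      funext t; rw [pP_f]; ring
    simp only [pU]; rw [hfun, (hasDerivAt_gen _ _ _ _ _ _ _ hu).deriv]; ring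
  have h3 : pP (pP f) x u p q = -(36 * p) / u ^ 2 - 12 / (x * u) := by
    have hfun : (fun t : ℝ => pP f x u t q)
        = fun t => (-(12 / (x * u))) * t + (-(18 / u ^ 2)) * t ^ 2 + 0 * t ^ 3
          + (6 * q / u - 6 / x ^ 2) := by
      funext t; rw [pP_f]; ring
    rw [show pP (pP f) x u p q = deriv (fun t : ℝ => pP f x u t q) p from rfl,
      hfun, (hasDerivAt_poly _ _ _ _ p).deriv]; ring
  have h4 : pQ (pP f) x u p q = 6 / u := by
    have hfun : (fun t : ℝ => pP f x u p t)
        = fun t => (6 / u) * t + 0 * t ^ 2 + 0 * t ^ 3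
          + (-(18 * p ^ 2 / u ^ 2) - 12 * p / (x * u) - 6 / x ^ 2) := by
      funext t; rw [pP_f]; ring
    simp only [pQ]; rw [hfun, (hasDerivAt_poly _ _ _ _ q).deriv]; ring
  rw [h1, h2, h3, h4]

/-- For `f` of Example 3.1, the relative invariant
`I₃ = 4 f_q³ + 18 f_q (f_p − Dₓ f_q) + 9 Dₓ² f_q − 27 Dₓ f_p + 54 f_u`
vanishes identically on the set `x ≠ 0`, `u ≠ 0`. -/
theorem I3_vanishes_example1 :
    ∀ x u p q : ℝ, x ≠ 0 → u ≠ 0 →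
      4 * (pQ f x u p q) ^ 3
        + 18 * pQ f x u p q * (pP f x u p q - Dx f (pQ f) x u p q)
        + 9 * Dx f (Dx f (pQ f)) x u p q
        - 27 * Dx f (pP f) x u p q
        + 54 * pU f x u p q = 0 := by
  intro x u p q hx hu
  rw [pQ_f, pP_f, pU_f x u p q hu, DxA x u p q hx hu, DxDxA x u p q hx hu, DxB x u p q hx hu]
  simp only [f]
  field_simp
  ring
end

section
/- Let I ⊆ ℝ be an open interval with 0 ∉ I, and let u : I → ℝ be three times differentiable with u(x) ≠ 0 for all x ∈ I, satisfying on I the nonlinear ODE u''' = (6u'/u + 3/x)·u'' − 6u'³/u² − 6u'²/(x·u) − 6u'/x² − 6u/x³. Then there exist real constants a, b, c such that −1/(x·u(x)) = a·x² + b·x + c for all x ∈ I; in particular the function v(x) = −1/(x·u(x)) satisfies v'''(x) = 0 on I. -/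
lemma const_of_hasDerivAt_zero {s : Set ℝ} (hs : IsOpen s) (hc : Convex ℝ s)
    {f : ℝ → ℝ} (hf : ∀ x ∈ s, HasDerivAt f 0 x) {x y : ℝ}
    (hx : x ∈ s) (hy : y ∈ s) : f x = f y := by
  refine hc.is_const_of_fderivWithin_eq_zero
    (fun z hz => (hf z hz).differentiableAt.differentiableWithinAt) (fun z hz => ?_) hx hy
  rw [fderivWithin_of_isOpen hs hz, (hf z hz).hasFDerivAt.fderiv]
  ext
  simp

lemma quad_of_derivs {s : Set ℝ} (hs : IsOpen s) (hc : Convex ℝ s)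
    {f g h : ℝ → ℝ}
    (hfg : ∀ x ∈ s, HasDerivAt f (g x) x)
    (hgh : ∀ x ∈ s, HasDerivAt g (h x) x)
    (hh : ∀ x ∈ s, HasDerivAt h 0 x) :
    ∃ a b c : ℝ, ∀ x ∈ s, f x = a * x ^ 2 + b * x + c := by
  rcases s.eq_empty_or_nonempty with rfl | ⟨x0, hx0⟩
  · exact ⟨0, 0, 0, by simp⟩
  have hk : ∀ x ∈ s, h x = h x0 := fun x hx =>
    const_of_hasDerivAt_zero hs hc hh hx hx0
  set k := h x0 with hkdef
  have hg' : ∀ x ∈ s, HasDerivAt (fun y => g y - k * y) 0 x := by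
    intro x hx
    have H := (hgh x hx).fun_sub ((hasDerivAt_id x).const_mul k)
    rw [hk x hx] at H
    simpa using H
  have hb : ∀ x ∈ s, g x - k * x = g x0 - k * x0 := fun x hx =>
    const_of_hasDerivAt_zero hs hc hg' hx hx0
  set b := g x0 - k * x0 with hbdef
  have hf' : ∀ x ∈ s, HasDerivAt (fun y => f y - (k / 2 * y ^ 2 + b * y)) 0 x := by
    intro x hx
    have h2 : HasDerivAt (fun y : ℝ => k / 2 * y ^ 2 + b * y) (g x) x := by
      have H := ((hasDerivAt_pow 2 x).const_mul (k / 2)).add ((hasDerivAt_id x).const_mul b)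
      have hgx : g x = k * x + b := by have := hb x hx; linarith
      have : k / 2 * (((2:ℕ):ℝ) * x ^ (2 - 1)) + b * 1 = g x := by rw [hgx]; push_cast; ring
      rwa [this] at H
    simpa using (hfg x hx).fun_sub h2
  have hcc : ∀ x ∈ s, f x - (k / 2 * x ^ 2 + b * x) = f x0 - (k / 2 * x0 ^ 2 + b * x0) :=
    fun x hx => const_of_hasDerivAt_zero hs hc hf' hx hx0
  exact ⟨k / 2, b, f x0 - (k / 2 * x0 ^ 2 + b * x0), fun x hx => by
    have := hcc x hx; linarith⟩

lemma third_deriv_quad_zero {s : Set ℝ} (hs : IsOpen s) {f : ℝ → ℝ} {a b c : ℝ}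
    (hf : ∀ x ∈ s, f x = a * x ^ 2 + b * x + c) :
    ∀ x ∈ s, deriv (deriv (deriv f)) x = 0 := by
  have hp1 : deriv (fun y : ℝ => a * y ^ 2 + b * y + c) = fun y => a * (2 * y) + b := by
    funext y
    have H := ((((hasDerivAt_pow 2 y).const_mul a).add ((hasDerivAt_id y).const_mul b)).add_const c)
    have he : a * (((2:ℕ):ℝ) * y ^ (2 - 1)) + b * 1 = a * (2 * y) + b := by push_cast; ring
    rw [he] at H
    exact H.deriv
  have hp2 : deriv (fun y : ℝ => a * (2 * y) + b) = fun _ => a * 2 := by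
    funext y
    have H := (((hasDerivAt_id y).const_mul 2).const_mul a).add_const b
    simpa using H.deriv
  have h1 : Set.EqOn (deriv f) (fun y => a * (2 * y) + b) s := by
    intro z hz
    have : f =ᶠ[nhds z] (fun y => a * y ^ 2 + b * y + c) :=
      Filter.eventuallyEq_of_mem (hs.mem_nhds hz) hf
    rw [this.deriv_eq, hp1]
  have h2 : Set.EqOn (deriv (deriv f)) (fun _ => a * 2) s := by
    intro z hz
    have : deriv f =ᶠ[nhds z] (fun y => a * (2 * y) + b) :=
      Filter.eventuallyEq_of_mem (hs.mem_nhds hz) h1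
    rw [this.deriv_eq, hp2]
  intro x hx
  have : deriv (deriv f) =ᶠ[nhds x] (fun _ => a * 2) :=
    Filter.eventuallyEq_of_mem (hs.mem_nhds hx) h2
  rw [this.deriv_eq, deriv_const]

/-- If `u` is a three times differentiable solution, on an open interval `I` not
containing `0` and with `u ≠ 0` on `I`, of the nonlinear ODE
`u''' = (6u'/u + 3/x)u'' − 6u'³/u² − 6u'²/(xu) − 6u'/x² − 6u/x³`,
then `−1/(x·u(x))` is a quadratic polynomial `a x² + b x + c` on `I`;
in particular `v(x) = −1/(x·u(x))` satisfies `v''' = 0` on `I`. -/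
theorem solution_example1 (I : Set ℝ) (hI : IsOpen I) (hconv : Convex ℝ I)
    (h0 : (0 : ℝ) ∉ I) (u : ℝ → ℝ)
    (hu0 : ∀ x ∈ I, u x ≠ 0)
    (hu1 : ∀ x ∈ I, DifferentiableAt ℝ u x)
    (hu2 : ∀ x ∈ I, DifferentiableAt ℝ (deriv u) x)
    (hu3 : ∀ x ∈ I, DifferentiableAt ℝ (deriv (deriv u)) x)
    (hode : ∀ x ∈ I, deriv (deriv (deriv u)) x
      = (6 * deriv u x / u x + 3 / x) * deriv (deriv u) x
        - 6 * (deriv u x) ^ 3 / (u x) ^ 2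
        - 6 * (deriv u x) ^ 2 / (x * u x)
        - 6 * deriv u x / x ^ 2
        - 6 * u x / x ^ 3) :
    ∃ a b c : ℝ,
      (∀ x ∈ I, -1 / (x * u x) = a * x ^ 2 + b * x + c) ∧
      (∀ x ∈ I, deriv (deriv (deriv (fun y => -1 / (y * u y)))) x = 0) := by
  have hxne : ∀ x ∈ I, x ≠ 0 := fun x hx h => h0 (h ▸ hx)
  have hwne : ∀ x ∈ I, x * u x ≠ 0 := fun x hx => mul_ne_zero (hxne x hx) (hu0 x hx)
  have hW : ∀ x ∈ I, HasDerivAt (fun y => y * u y) (u x + x * deriv u x) x := by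
    intro x hx
    simpa using (hasDerivAt_id x).fun_mul (hu1 x hx).hasDerivAt
  have hN : ∀ x ∈ I, HasDerivAt (fun y => u y + y * deriv u y)
      (2 * deriv u x + x * deriv (deriv u) x) x := by
    intro x hx
    have H := (hu1 x hx).hasDerivAt.fun_add ((hasDerivAt_id x).fun_mul (hu2 x hx).hasDerivAt)
    refine H.congr_deriv ?_
    simp; ring
  have hV : ∀ x ∈ I, HasDerivAt (fun y => -1 / (y * u y))
      ((u x + x * deriv u x) / (x * u x) ^ 2) x := by
    intro x hx
    have H := (hasDerivAt_const x (-1 : ℝ)).fun_div (hW x hx) (hwne x hx)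
    refine H.congr_deriv ?_
    ring
  have hV1 : ∀ x ∈ I, HasDerivAt
      (fun y => (u y + y * deriv u y) / (y * u y) ^ 2)
      ((2 * deriv u x + x * deriv (deriv u) x) / (x * u x) ^ 2
        - 2 * (u x + x * deriv u x) ^ 2 / (x * u x) ^ 3) x := by
    intro x hx
    have hx0 := hxne x hx
    have hu0' := hu0 x hx
    have H := (hN x hx).fun_div ((hW x hx).fun_pow 2) (pow_ne_zero 2 (hwne x hx))
    refine H.congr_deriv ?_
    field_simp
    ring
  have hV2 : ∀ x ∈ I, HasDerivAt
      (fun y => (2 * deriv u y + y * deriv (deriv u) y) / (y * u y) ^ 2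
        - 2 * (u y + y * deriv u y) ^ 2 / (y * u y) ^ 3) 0 x := by
    intro x hx
    have hx0 := hxne x hx
    have hu0' := hu0 x hx
    have hA := ((hu2 x hx).hasDerivAt.const_mul 2).fun_add
      ((hasDerivAt_id x).fun_mul (hu3 x hx).hasDerivAt)
    have hAB := (hA.fun_div ((hW x hx).fun_pow 2) (pow_ne_zero 2 (hwne x hx))).fun_sub
      ((((hN x hx).fun_pow 2).const_mul 2).fun_div ((hW x hx).fun_pow 3) (pow_ne_zero 3 (hwne x hx)))
    refine hAB.congr_deriv ?_
    rw [hode x hx, id_eq]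
    field_simp
    ring
  obtain ⟨a, b, c, habc⟩ := quad_of_derivs hI hconv hV hV1 hV2
  exact ⟨a, b, c, habc, third_deriv_quad_zero hI habc⟩
end

section
/- Let a, b, c be real constants and let I ⊆ ℝ be an open interval on which x·(a·x² + b·x + c) ≠ 0. Then the function u(x) = −1/(x·(a·x² + b·x + c)) is three times differentiable on I and satisfies on I the nonlinear ODE u''' = (6u'/u + 3/x)·u'' − 6u'³/u² − 6u'²/(x·u) − 6u'/x² − 6u/x³. -/
noncomputable section GenSolAux

variable (a b c : ℝ)

private def P (x : ℝ) : ℝ := x * (a * x ^ 2 + b * x + c)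
private def N (x : ℝ) : ℝ := 3 * a * x ^ 2 + 2 * b * x + c

private lemma hPd (x : ℝ) : HasDerivAt (P a b c) (N a b c x) x := by
  have h1 : HasDerivAt (fun x : ℝ => a * x ^ 2 + b * x + c)
      (a * (2 * x ^ 1) + b * 1) x :=
    (((hasDerivAt_pow 2 x).const_mul a).add
      ((hasDerivAt_id' x).const_mul b)).add_const c
  have := (hasDerivAt_id' x).mul h1
  unfold P N
  refine this.congr_deriv ?_
  ring

private lemma hNd (x : ℝ) : HasDerivAt (N a b c) (6 * a * x + 2 * b) x := by
  have h1 : HasDerivAt (fun x : ℝ => 3 * a * x ^ 2 + 2 * b * x + c)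
      (3 * a * (2 * x ^ 1) + 2 * b * 1) x :=
    (((hasDerivAt_pow 2 x).const_mul (3 * a)).add
      ((hasDerivAt_id' x).const_mul (2 * b))).add_const c
  unfold N
  refine h1.congr_deriv ?_
  ring

private lemma hud (x : ℝ) (h : P a b c x ≠ 0) :
    HasDerivAt (fun x => -1 / P a b c x) (N a b c x / (P a b c x) ^ 2) x := by
  have := (hasDerivAt_const x (-1 : ℝ)).div (hPd a b c x) h
  refine this.congr_deriv ?_
  field_simp
  ring

private def D1 (x : ℝ) : ℝ := N a b c x / (P a b c x) ^ 2

private lemma hD1d (x : ℝ) (h : P a b c x ≠ 0) :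
    HasDerivAt (D1 a b c)
      (((6 * a * x + 2 * b) * P a b c x - 2 * (N a b c x) ^ 2) / (P a b c x) ^ 3) x := by
  have hN := hNd a b c x
  have hP2 : HasDerivAt (fun x => (P a b c x) ^ 2)
      (2 * P a b c x * N a b c x) x := by
    have := (hPd a b c x).pow 2
    exact this.congr_deriv (by norm_num)
  have := hN.div hP2 (pow_ne_zero 2 h)
  refine this.congr_deriv ?_
  field_simp

private def D2 (x : ℝ) : ℝ :=
  ((6 * a * x + 2 * b) * P a b c x - 2 * (N a b c x) ^ 2) / (P a b c x) ^ 3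

private lemma hD2d (x : ℝ) (h : P a b c x ≠ 0) :
    HasDerivAt (D2 a b c)
      ((6 * a * (P a b c x) ^ 2 - 6 * (6 * a * x + 2 * b) * N a b c x * P a b c x
        + 6 * (N a b c x) ^ 3) / (P a b c x) ^ 4) x := by
  have hNum : HasDerivAt (fun x => (6 * a * x + 2 * b) * P a b c x - 2 * (N a b c x) ^ 2)
      (6 * a * P a b c x + (6 * a * x + 2 * b) * N a b c x
        - 2 * (2 * N a b c x * (6 * a * x + 2 * b))) x := by
    have hN := hNd a b c x
    have hL : HasDerivAt (fun x : ℝ => 6 * a * x + 2 * b) (6 * a) x := by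
      simpa using ((hasDerivAt_id' x).const_mul (6 * a)).add_const (2 * b)
    have h1 := hL.mul (hPd a b c x)
    have h2 := (hN.pow 2).const_mul (2 : ℝ)
    have := h1.sub h2
    refine this.congr_deriv ?_
    ring
  have hDen : HasDerivAt (fun x => (P a b c x) ^ 3)
      (3 * (P a b c x) ^ 2 * N a b c x) x := by
    have := (hPd a b c x).pow 3
    exact this.congr_deriv (by norm_num)
  have := hNum.div hDen (pow_ne_zero 3 h)
  refine this.congr_deriv ?_
  field_simp
  ring

end GenSolAux

/-- For any constants `a, b, c` and open interval `I` on which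
`x (a x² + b x + c) ≠ 0`, the function `u(x) = −1/(x(a x² + b x + c))` is three
times differentiable on `I` and solves the nonlinear ODE
`u''' = (6u'/u + 3/x)u'' − 6u'³/u² − 6u'²/(xu) − 6u'/x² − 6u/x³` there. -/
theorem general_solution_example1 (a b c : ℝ) (I : Set ℝ) (hI : IsOpen I)
    (hconv : Convex ℝ I)
    (hne : ∀ x ∈ I, x * (a * x ^ 2 + b * x + c) ≠ 0) :
    (∀ x ∈ I,
        DifferentiableAt ℝ (fun x => -1 / (x * (a * x ^ 2 + b * x + c))) x ∧
        DifferentiableAt ℝ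
          (deriv (fun x => -1 / (x * (a * x ^ 2 + b * x + c)))) x ∧
        DifferentiableAt ℝ
          (deriv (deriv (fun x => -1 / (x * (a * x ^ 2 + b * x + c))))) x) ∧
    (∀ x ∈ I,
        deriv (deriv (deriv (fun x => -1 / (x * (a * x ^ 2 + b * x + c))))) x
          = (6 * deriv (fun x => -1 / (x * (a * x ^ 2 + b * x + c))) x
                / (-1 / (x * (a * x ^ 2 + b * x + c))) + 3 / x)
              * deriv (deriv (fun x => -1 / (x * (a * x ^ 2 + b * x + c)))) x
            - 6 * (deriv (fun x => -1 / (x * (a * x ^ 2 + b * x + c))) x) ^ 3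
                / (-1 / (x * (a * x ^ 2 + b * x + c))) ^ 2
            - 6 * (deriv (fun x => -1 / (x * (a * x ^ 2 + b * x + c))) x) ^ 2
                / (x * (-1 / (x * (a * x ^ 2 + b * x + c))))
            - 6 * deriv (fun x => -1 / (x * (a * x ^ 2 + b * x + c))) x / x ^ 2
            - 6 * (-1 / (x * (a * x ^ 2 + b * x + c))) / x ^ 3) := by
  have hP : ∀ x ∈ I, P a b c x ≠ 0 := fun x hx => hne x hx
  -- u = fun x => -1 / P x
  have huP : (fun x => -1 / (x * (a * x ^ 2 + b * x + c))) = fun x => -1 / P a b c x := rfl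
  -- deriv u = D1 on I (eventually near each point)
  have hd1 : ∀ x ∈ I, deriv (fun x => -1 / (x * (a * x ^ 2 + b * x + c))) x = D1 a b c x := by
    intro x hx
    exact (hud a b c x (hP x hx)).deriv
  have hev1 : ∀ x ∈ I,
      deriv (fun x => -1 / (x * (a * x ^ 2 + b * x + c))) =ᶠ[nhds x] D1 a b c := by
    intro x hx
    filter_upwards [hI.mem_nhds hx] with y hy using hd1 y hy
  have hd2 : ∀ x ∈ I,
      deriv (deriv (fun x => -1 / (x * (a * x ^ 2 + b * x + c)))) x = D2 a b c x := by
    intro x hx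
    rw [(hev1 x hx).deriv_eq]
    exact (hD1d a b c x (hP x hx)).deriv
  have hev2 : ∀ x ∈ I,
      deriv (deriv (fun x => -1 / (x * (a * x ^ 2 + b * x + c)))) =ᶠ[nhds x] D2 a b c := by
    intro x hx
    filter_upwards [hI.mem_nhds hx] with y hy using hd2 y hy
  have hd3 : ∀ x ∈ I,
      deriv (deriv (deriv (fun x => -1 / (x * (a * x ^ 2 + b * x + c))))) x
        = (6 * a * (P a b c x) ^ 2 - 6 * (6 * a * x + 2 * b) * N a b c x * P a b c x
            + 6 * (N a b c x) ^ 3) / (P a b c x) ^ 4 := by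
    intro x hx
    rw [(hev2 x hx).deriv_eq]
    exact (hD2d a b c x (hP x hx)).deriv
  constructor
  · intro x hx
    refine ⟨(hud a b c x (hP x hx)).differentiableAt, ?_, ?_⟩
    · exact (Filter.EventuallyEq.differentiableAt_iff (hev1 x hx)).mpr
        (hD1d a b c x (hP x hx)).differentiableAt
    · exact (Filter.EventuallyEq.differentiableAt_iff (hev2 x hx)).mpr
        (hD2d a b c x (hP x hx)).differentiableAt
  · intro x hx
    have hx0 : x ≠ 0 := fun h => hne x hx (by simp [h])
    have hq : a * x ^ 2 + b * x + c ≠ 0 := fun h => hne x hx (by simp [h])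
    have hPx : P a b c x ≠ 0 := hP x hx
    rw [hd3 x hx, hd2 x hx, hd1 x hx]
    unfold D2 D1 N P
    have hq' : x * (a * x + b) + c ≠ 0 := by convert hq using 1; ring
    field_simp
    ring
end

section
/- Let I ⊆ ℝ be an open interval and let u : I → ℝ be three times differentiable with 1 + u'(x) ≠ 0 for all x ∈ I, satisfying on I the nonlinear ODE u''' = 3u''²/(1+u'). Then there exist real constants a, b, c such that −x = a·(x + u(x))² + b·(x + u(x)) + c for all x ∈ I. -/
lemma my_const_of_deriv_zero {I : Set ℝ} (hI : IsOpen I) (hconv : Convex ℝ I)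
    {f : ℝ → ℝ} (hf : ∀ x ∈ I, HasDerivAt f 0 x) {x y : ℝ}
    (hx : x ∈ I) (hy : y ∈ I) : f x = f y := by
  apply hconv.is_const_of_fderivWithin_eq_zero (𝕜 := ℝ) (f := f) _ _ hx hy
  · intro z hz; exact (hf z hz).differentiableAt.differentiableWithinAt
  · intro z hz
    rw [fderivWithin_of_isOpen hI hz, ((hf z hz).hasFDerivAt).fderiv]
    ext
    simp

/-- If `u` is a three times differentiable solution, on an open interval `I` with
`1 + u' ≠ 0` on `I`, of the nonlinear ODE `u''' = 3u''²/(1+u')`, then there are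
constants `a, b, c` with `−x = a(x+u)² + b(x+u) + c` on `I`. -/
theorem solution_example2 (I : Set ℝ) (hI : IsOpen I) (hconv : Convex ℝ I)
    (u : ℝ → ℝ)
    (hu0 : ∀ x ∈ I, 1 + deriv u x ≠ 0)
    (hu1 : ∀ x ∈ I, DifferentiableAt ℝ u x)
    (hu2 : ∀ x ∈ I, DifferentiableAt ℝ (deriv u) x)
    (hu3 : ∀ x ∈ I, DifferentiableAt ℝ (deriv (deriv u)) x)
    (hode : ∀ x ∈ I, deriv (deriv (deriv u)) x
      = 3 * (deriv (deriv u) x) ^ 2 / (1 + deriv u x)) :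
    ∃ a b c : ℝ, ∀ x ∈ I,
      -x = a * (x + u x) ^ 2 + b * (x + u x) + c := by
  rcases Set.eq_empty_or_nonempty I with hIe | ⟨x₀, hx₀⟩
  · exact ⟨0, 0, 0, fun x hx => by simp [hIe] at hx⟩
  -- step 1 : g = u'' / (1+u')³ is constant on I
  set g : ℝ → ℝ := fun x => deriv (deriv u) x / (1 + deriv u x) ^ 3 with hg_def
  have hgz : ∀ x ∈ I, HasDerivAt g 0 x := by
    intro x hx
    have h2 : HasDerivAt (deriv u) (deriv (deriv u) x) x := (hu2 x hx).hasDerivAt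
    have h3 : HasDerivAt (deriv (deriv u)) (deriv (deriv (deriv u)) x) x :=
      (hu3 x hx).hasDerivAt
    have hden : HasDerivAt (fun x => (1 + deriv u x) ^ 3)
        ((3 : ℕ) * (1 + deriv u x) ^ 2 * deriv (deriv u) x) x := by
      simpa using (h2.const_add 1).fun_pow 3
    have hne : (1 + deriv u x) ^ 3 ≠ 0 := pow_ne_zero _ (hu0 x hx)
    have hg := h3.fun_div hden hne
    refine hg.congr_deriv ?_
    rw [hode x hx]
    have h0 := hu0 x hx
    field_simp
    ring
  set a : ℝ := g x₀ / 2 with ha_def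
  have hga : ∀ x ∈ I, deriv (deriv u) x = 2 * a * (1 + deriv u x) ^ 3 := by
    intro x hx
    have hc := my_const_of_deriv_zero hI hconv hgz hx hx₀
    have hne : (1 + deriv u x) ^ 3 ≠ 0 := pow_ne_zero _ (hu0 x hx)
    calc deriv (deriv u) x = g x * (1 + deriv u x) ^ 3 := by
          rw [hg_def]; field_simp [hu0 x hx]
      _ = 2 * a * (1 + deriv u x) ^ 3 := by rw [hc, ha_def]; ring
  -- step 2 : G = -(1+u')⁻¹ - 2a(x+u) is constant on I
  set G : ℝ → ℝ := fun x => -(1 + deriv u x)⁻¹ - 2 * a * (x + u x) with hG_def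
  have hGz : ∀ x ∈ I, HasDerivAt G 0 x := by
    intro x hx
    have h1 : HasDerivAt u (deriv u x) x := (hu1 x hx).hasDerivAt
    have h2 : HasDerivAt (deriv u) (deriv (deriv u) x) x := (hu2 x hx).hasDerivAt
    have h0 := hu0 x hx
    have hinv : HasDerivAt (fun x => -(1 + deriv u x)⁻¹)
        (deriv (deriv u) x / (1 + deriv u x) ^ 2) x := by
      have := ((h2.const_add 1).inv h0).fun_neg
      refine this.congr_deriv ?_
      field_simp
    have hpsi : HasDerivAt (fun x => 2 * a * (x + u x))
        (2 * a * (1 + deriv u x)) x := ((hasDerivAt_id x).add h1).const_mul (2 * a)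
    have hG := hinv.fun_sub hpsi
    refine hG.congr_deriv ?_
    rw [hga x hx]
    field_simp
    ring
  set b : ℝ := G x₀ with hb_def
  have hGb : ∀ x ∈ I, 2 * a * (x + u x) + b = -(1 + deriv u x)⁻¹ := by
    intro x hx
    have hc := my_const_of_deriv_zero hI hconv hGz hx hx₀
    simp only [hG_def] at hc
    rw [hb_def]
    simp only [hG_def]
    linarith [hc]
  -- step 3 : F = -x - a(x+u)² - b(x+u) is constant on I
  set F : ℝ → ℝ := fun x => -x - a * (x + u x) ^ 2 - b * (x + u x) with hF_def
  have hFz : ∀ x ∈ I, HasDerivAt F 0 x := by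
    intro x hx
    have h1 : HasDerivAt u (deriv u x) x := (hu1 x hx).hasDerivAt
    have h0 := hu0 x hx
    have hpsi : HasDerivAt (fun x => x + u x) (1 + deriv u x) x :=
      (hasDerivAt_id x).add h1
    have hF := ((hasDerivAt_id x).neg.sub
      ((hpsi.pow 2).const_mul a)).sub (hpsi.const_mul b)
    refine hF.congr_deriv ?_
    have := hGb x hx
    have h2 : 2 * a * (x + u x) + b = -(1 + deriv u x)⁻¹ := this
    field_simp at h2 ⊢
    norm_num only
    nlinarith [h2]
  refine ⟨a, b, F x₀, fun x hx => ?_⟩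
  have hc := my_const_of_deriv_zero hI hconv hFz hx hx₀
  simp only [hF_def] at hc ⊢
  linarith [hc]
end

section
/- Let I ⊆ ℝ be an open interval, let a, b, c be real constants, and let u : I → ℝ be three times differentiable with 1 + u'(x) ≠ 0 for all x ∈ I, such that −x = a·(x + u(x))² + b·(x + u(x)) + c for all x ∈ I. Then u satisfies on I the nonlinear ODE u''' = 3u''²/(1+u'). -/
/-- If `u` is three times differentiable on an open interval `I`, with
`1 + u' ≠ 0` on `I`, and satisfies `−x = a(x+u)² + b(x+u) + c` on `I` for some
constants `a, b, c`, then `u` solves the nonlinear ODE `u''' = 3u''²/(1+u')` on `I`. -/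
theorem inverse_solution_example2 (I : Set ℝ) (hI : IsOpen I) (hconv : Convex ℝ I)
    (a b c : ℝ) (u : ℝ → ℝ)
    (hu0 : ∀ x ∈ I, 1 + deriv u x ≠ 0)
    (hu1 : ∀ x ∈ I, DifferentiableAt ℝ u x)
    (hu2 : ∀ x ∈ I, DifferentiableAt ℝ (deriv u) x)
    (hu3 : ∀ x ∈ I, DifferentiableAt ℝ (deriv (deriv u)) x)
    (hsol : ∀ x ∈ I, -x = a * (x + u x) ^ 2 + b * (x + u x) + c) :
    ∀ x ∈ I, deriv (deriv (deriv u)) x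
      = 3 * (deriv (deriv u) x) ^ 2 / (1 + deriv u x) := by
  -- derivative of v := x + u
  have hv : ∀ x ∈ I, HasDerivAt (fun y => y + u y) (1 + deriv u x) x := by
    intro x hx
    exact (hasDerivAt_id x).add (hu1 x hx).hasDerivAt
  -- first equation: (2a(x+u)+b)(1+u') = -1
  have e1 : ∀ x ∈ I, (2 * a * (x + u x) + b) * (1 + deriv u x) = -1 := by
    intro x hx
    have hg : HasDerivAt (fun y => a * (y + u y) ^ 2 + b * (y + u y) + c)
        ((2 * a * (x + u x) + b) * (1 + deriv u x)) x := by
      have h1 := (((hv x hx).pow 2).const_mul a).add ((hv x hx).const_mul b)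
      have h2 := h1.add_const c
      exact h2.congr_deriv (by norm_num; ring)
    have hev : (fun y => -y) =ᶠ[nhds x] (fun y => a * (y + u y) ^ 2 + b * (y + u y) + c) := by
      filter_upwards [hI.mem_nhds hx] with y hy using hsol y hy
    have hneg : HasDerivAt (fun y : ℝ => -y) ((2 * a * (x + u x) + b) * (1 + deriv u x)) x :=
      hg.congr_of_eventuallyEq hev
    have := hneg.deriv
    have h2 : deriv (fun y : ℝ => -y) x = -1 := by
      simp
    rw [this] at h2
    exact h2
  -- second equation
  have e2 : ∀ x ∈ I,
      2 * a * (1 + deriv u x) ^ 2 + (2 * a * (x + u x) + b) * deriv (deriv u) x = 0 := by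
    intro x hx
    have hP : HasDerivAt (fun y => (2 * a * (y + u y) + b) * (1 + deriv u y))
        (2 * a * (1 + deriv u x) ^ 2 + (2 * a * (x + u x) + b) * deriv (deriv u) x) x := by
      have hK : HasDerivAt (fun y => 2 * a * (y + u y) + b) (2 * a * (1 + deriv u x)) x :=
        ((hv x hx).const_mul (2 * a)).add_const b
      have hW : HasDerivAt (fun y => 1 + deriv u y) (deriv (deriv u) x) x := by
        exact ((hasDerivAt_const x (1:ℝ)).add (hu2 x hx).hasDerivAt).congr_deriv (zero_add _)
      have := hK.mul hW
      exact this.congr_deriv (by norm_num; ring)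
    have hev : (fun y => (2 * a * (y + u y) + b) * (1 + deriv u y)) =ᶠ[nhds x]
        (fun _ => (-1 : ℝ)) := by
      filter_upwards [hI.mem_nhds hx] with y hy using e1 y hy
    have hc : HasDerivAt (fun y => (2 * a * (y + u y) + b) * (1 + deriv u y)) 0 x :=
      (hasDerivAt_const x (-1 : ℝ)).congr_of_eventuallyEq hev
    exact hP.unique hc
  -- third equation
  have e3 : ∀ x ∈ I,
      6 * a * (1 + deriv u x) * deriv (deriv u) x
        + (2 * a * (x + u x) + b) * deriv (deriv (deriv u)) x = 0 := by
    intro x hx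
    have hQ : HasDerivAt
        (fun y => 2 * a * (1 + deriv u y) ^ 2 + (2 * a * (y + u y) + b) * deriv (deriv u) y)
        (6 * a * (1 + deriv u x) * deriv (deriv u) x
          + (2 * a * (x + u x) + b) * deriv (deriv (deriv u)) x) x := by
      have hW : HasDerivAt (fun y => 1 + deriv u y) (deriv (deriv u) x) x := by
        exact ((hasDerivAt_const x (1:ℝ)).add (hu2 x hx).hasDerivAt).congr_deriv (zero_add _)
      have hK : HasDerivAt (fun y => 2 * a * (y + u y) + b) (2 * a * (1 + deriv u x)) x :=
        ((hv x hx).const_mul (2 * a)).add_const b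
      have h1 : HasDerivAt (fun y => 2 * a * (1 + deriv u y) ^ 2)
          (2 * a * (2 * (1 + deriv u x) ^ 1 * deriv (deriv u) x)) x :=
        (hW.pow 2).const_mul (2 * a)
      have h2 := hK.mul (hu3 x hx).hasDerivAt
      have := h1.add h2
      exact this.congr_deriv (by norm_num; ring)
    have hev : (fun y => 2 * a * (1 + deriv u y) ^ 2 + (2 * a * (y + u y) + b) * deriv (deriv u) y)
        =ᶠ[nhds x] (fun _ => (0 : ℝ)) := by
      filter_upwards [hI.mem_nhds hx] with y hy using e2 y hy
    have hc := (hasDerivAt_const x (0 : ℝ)).congr_of_eventuallyEq hev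
    exact hQ.unique hc
  -- algebra
  intro x hx
  have h1 := e1 x hx
  have h2 := e2 x hx
  have h3 := e3 x hx
  have hw := hu0 x hx
  set w := 1 + deriv u x
  set K := 2 * a * (x + u x) + b
  set p := deriv (deriv u) x
  set q := deriv (deriv (deriv u)) x
  field_simp
  nlinarith [mul_self_nonneg (w - p), sq_nonneg w, h1, h2, h3, mul_comm K w]
end
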